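/- For every fixed integer k ≥ 2 there exists a function g : ℕ → ℝ with g(n) = o(k^n/n) as n → ∞ (with respect to the atTop filter) such that for every n ≥ 1, every pseudo-PI-sequence with n states and k actions has size at most (k/(k−1))·(k^n/n) + g(n). -/

import Mathlib

open Finset Filter Asymptotics Topology

/-! ### Auxiliary box lemma -/


lemma pp_box_lemma {ι : Type} [Fintype ι] [DecidableEq ι] {K r : ℕ}
    (g : Fin r → ι → Fin (K+1)) (F : Fin r → ι → Finset (Fin (K+1)))
    (hmem : ∀ j s, g j s ∈ F j s) (hF2 : ∀ j s, 2 ≤ (F j s).card)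
    (hni : ∀ j j' : Fin r, j < j' → ∃ s, g j s ∉ F j' s) :
    r ≤ K ^ (Fintype.card ι) := by
  classical
  have hb : ∀ j s, ∃ b ∈ F j s, b ≠ g j s := fun j s =>
    Finset.exists_mem_ne (hF2 j s) _
  choose b hbmem hbne using hb
  set χ : Fin r → ι → Fin (K+1) → ℝ := fun j s y =>
    (if y = g j s then 1 else 0) - (if y = b j s then 1 else 0) with hχ
  set q : Fin r → (ι → Fin (K+1)) → ℝ := fun j x => ∏ s, χ j s (x s) with hqdef
  set α : Fin r → ι → Fin (K+1) → ℝ := fun j s c =>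
    if c = Fin.last K then 0 else χ j s c with hα
  set u : Fin (K+1) → Fin (K+1) → ℝ := fun c y =>
    (if y = c then 1 else 0) - (if y = Fin.last K then 1 else 0) with hu
  -- sum of χ over all actions is 0
  have hχsum : ∀ j s, (∑ c : Fin (K+1), χ j s c) = 0 := by
    intro j s
    simp only [hχ, Finset.sum_sub_distrib]
    rw [Finset.sum_ite_eq' univ (g j s) (fun _ => (1:ℝ)),
        Finset.sum_ite_eq' univ (b j s) (fun _ => (1:ℝ))]
    simp
  -- per-coordinate expansion identity
  have key : ∀ j s y, (∑ c : Fin K, α j s c.castSucc * u c.castSucc y) = χ j s y := by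
    intro j s y
    have h1 : (∑ c : Fin (K+1), α j s c * u c y)
        = (∑ c : Fin K, α j s c.castSucc * u c.castSucc y) := by
      rw [Fin.sum_univ_castSucc]
      simp [hα]
    rw [← h1]
    have h2 : (∑ c : Fin (K+1), α j s c * u c y)
        = (∑ c : Fin (K+1), (if c = y then α j s c else 0))
          - (if y = Fin.last K then 1 else 0) * (∑ c : Fin (K+1), α j s c) := by
      rw [Finset.mul_sum, ← Finset.sum_sub_distrib]
      apply Finset.sum_congr rfl
      intro c _
      simp only [hu]
      split_ifs with hA hB hC
      all_goals try ring
      all_goals (exfalso; subst_vars; simp_all)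
    rw [h2, Finset.sum_ite_eq' univ y (fun c => α j s c)]
    have hcast : ∀ c : Fin K, α j s c.castSucc = χ j s c.castSucc := fun c => by
      simp [hα, (Fin.castSucc_lt_last c).ne]
    have h3 : (∑ c : Fin (K+1), α j s c) = - χ j s (Fin.last K) := by
      have e1 : (∑ c : Fin (K+1), α j s c) = ∑ c : Fin K, χ j s c.castSucc := by
        rw [Fin.sum_univ_castSucc, Finset.sum_congr rfl (fun c _ => hcast c)]
        simp [hα]
      have e2 : (∑ c : Fin (K+1), χ j s c)
          = (∑ c : Fin K, χ j s c.castSucc) + χ j s (Fin.last K) :=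
        Fin.sum_univ_castSucc _
      have := hχsum j s
      rw [e2] at this
      rw [e1]; linarith
    rw [h3]
    by_cases h : y = Fin.last K
    · simp [h, hα]
    · simp [h, hα]
  set w : Fin r → ((ι → Fin K) → ℝ) := fun j e => ∏ s, α j s ((e s).castSucc) with hw
  -- the linear map Φ
  set Φ : ((ι → Fin K) → ℝ) →ₗ[ℝ] ((ι → Fin (K+1)) → ℝ) :=
    { toFun := fun v x => ∑ e : ι → Fin K, v e * ∏ s, u ((e s).castSucc) (x s)
      map_add' := by
        intro v v'; funext x
        simp [add_mul, Finset.sum_add_distrib]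
      map_smul' := by
        intro c v; funext x
        simp [Finset.mul_sum, mul_assoc] } with hΦ
  have hΦw : ∀ j, Φ (w j) = q j := by
    intro j
    funext x
    show (∑ e : ι → Fin K, (∏ s, α j s ((e s).castSucc)) * ∏ s, u ((e s).castSucc) (x s)) = q j x
    have : ∀ e : ι → Fin K,
        (∏ s, α j s ((e s).castSucc)) * ∏ s, u ((e s).castSucc) (x s)
        = ∏ s, (α j s ((e s).castSucc) * u ((e s).castSucc) (x s)) := by
      intro e; rw [Finset.prod_mul_distrib]
    rw [Finset.sum_congr rfl (fun e _ => this e)]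
    have := Finset.prod_univ_sum (fun _ : ι => (univ : Finset (Fin K)))
      (fun s c => α j s c.castSucc * u c.castSucc (x s))
    rw [Fintype.piFinset_univ] at this
    rw [← this]
    exact Finset.prod_congr rfl (fun s _ => key j s (x s))
  have hq1 : ∀ j, q j (g j) = 1 := by
    intro j
    apply Finset.prod_eq_one
    intro s _
    have h1 : g j s ≠ b j s := Ne.symm (hbne j s)
    simp [hχ, h1]
  have hq0 : ∀ j j', j < j' → q j' (g j) = 0 := by
    intro j j' hlt
    obtain ⟨s, hs⟩ := hni j j' hlt
    apply Finset.prod_eq_zero (Finset.mem_univ s)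
    have h1 : g j s ≠ g j' s := fun h => hs (h ▸ hmem j' s)
    have h2 : g j s ≠ b j' s := fun h => hs (h ▸ hbmem j' s)
    simp [hχ, h1, h2]
  have hLI : LinearIndependent ℝ w := by
    rw [Fintype.linearIndependent_iff]
    intro c hc
    have hq : (∑ i : Fin r, c i • q i) = 0 := by
      have := congrArg Φ hc
      rw [map_sum, map_zero] at this
      simpa [hΦw] using this
    suffices H : ∀ N : ℕ, ∀ h : N < r, c ⟨N, h⟩ = 0 by
      intro i; exact H i.1 i.2
    intro N
    induction N using Nat.strong_induction_on with
    | _ N IH =>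
      intro hN
      set j₀ : Fin r := ⟨N, hN⟩
      have hz : ∀ i : Fin r, i ≠ j₀ → c i * q i (g j₀) = 0 := by
        intro i hine
        rcases lt_or_gt_of_ne hine with h | h
        · have hci : c i = 0 := IH i.1 h i.2
          rw [hci, zero_mul]
        · rw [hq0 j₀ i h, mul_zero]
      have heval := congrFun hq (g j₀)
      simp only [Finset.sum_apply, Pi.smul_apply, Pi.zero_apply, smul_eq_mul] at heval
      rw [Finset.sum_eq_single j₀ (fun i _ h => hz i h)
        (fun h => absurd (Finset.mem_univ _) h)] at heval
      rw [hq1] at heval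
      simpa using heval
  have hcard := hLI.fintype_card_le_finrank
  rw [Fintype.card_fin, Module.finrank_pi, Fintype.card_fun, Fintype.card_fin] at hcard
  exact hcard


/-! ### Bound functions -/

def ppD (n : ℕ) : ℕ := Nat.sqrt n * Nat.sqrt (Nat.sqrt n)
def ppB (k n : ℕ) : ℕ := ((k-1)*n)/k - ppD n
def ppSmall (k n : ℕ) : ℕ := ∑ i ∈ Finset.range (ppB k n), (n.choose i) * (k-1)^i

lemma ppD_def (n : ℕ) : ppD n = Nat.sqrt n * Nat.sqrt (Nat.sqrt n) := rfl

lemma ppB_def (k n : ℕ) : ppB k n = ((k-1)*n)/k - ppD n := rfl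

lemma ppSmall_def (k n : ℕ) :
    ppSmall k n = ∑ i ∈ Finset.range (ppB k n), (n.choose i) * (k-1)^i := rfl

attribute [irreducible] ppD ppB ppSmall


noncomputable def ppBound (k n : ℕ) : ℝ :=
  (ppSmall k n : ℝ) + (k:ℝ)^n/((ppB k n : ℝ) + 1) + 1

/-- A pseudo-PI-sequence of size `m` with `n` states and `k` actions:
a sequence of policies `σ 0, …, σ (L-1)` together with an improvement-set
assignment `T` satisfying the non-inclusion property, and a strictly
increasing choice of indices `idx 0 < … < idx (m-1)` satisfying the
jumping property. -/
structure PseudoPISeq (n k m : ℕ) where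
  /-- length of the underlying sequence of policies -/
  L : ℕ
  /-- the underlying sequence of policies -/
  σ : Fin L → Fin n → Fin k
  /-- the improvement-set assignment -/
  T : Fin L → Set (Fin n × Fin k)
  /-- improvement sets never contain the currently chosen action -/
  hT : ∀ t s, (s, σ t s) ∉ T t
  /-- the non-inclusion property: for `t < t'` there is an improvement state `s` of
  `σ t` with `σ t s ≠ σ t' s` and `(s, σ t s) ∉ T t'` -/
  nonincl : ∀ t t' : Fin L, t < t' →
    ∃ s, (∃ a, (s, a) ∈ T t) ∧ σ t s ≠ σ t' s ∧ (s, σ t s) ∉ T t'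
  /-- the selected indices `t_0 < t_1 < … < t_{m-1}` -/
  idx : Fin m → Fin L
  idx_mono : StrictMono idx
  /-- the jumping property: `t_{j+1} - t_j ≥ |S_{t_j}| + 1` -/
  jump : ∀ j : ℕ, ∀ hj : j + 1 < m,
    (idx ⟨j, Nat.lt_of_succ_lt hj⟩ : ℕ) +
      {s | ∃ a, (s, a) ∈ T (idx ⟨j, Nat.lt_of_succ_lt hj⟩)}.ncard + 1 ≤
      (idx ⟨j + 1, hj⟩ : ℕ)


/-! ### Main combinatorial bound -/


lemma pp_main (k n m : ℕ) (hk : 2 ≤ k) (hn : 1 ≤ n) (P : PseudoPISeq n k m) :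
    (m : ℝ) ≤ ppBound k n := by
  classical
  obtain ⟨K, rfl⟩ : ∃ K, k = K + 1 := ⟨k - 1, by omega⟩
  set B := ppB (K+1) n with hB
  set Sfin : Fin P.L → Finset (Fin n) :=
    fun t => Finset.univ.filter (fun s => ∃ a, (s, a) ∈ P.T t) with hSfin
  have hSmem : ∀ t s, s ∈ Sfin t ↔ ∃ a, (s, a) ∈ P.T t := by
    intro t s; simp [hSfin]
  have h_ncard : ∀ t, {s | ∃ a, (s, a) ∈ P.T t}.ncard = (Sfin t).card := by
    intro t
    rw [show {s | ∃ a, (s, a) ∈ P.T t} = ↑(Sfin t) by ext s; simp [hSfin]]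
    exact Set.ncard_coe_finset _
  -- distinct policies
  have hσinj : Function.Injective P.σ := by
    intro t t' h
    by_contra hne
    rcases lt_or_gt_of_ne hne with hlt | hlt
    · obtain ⟨s, _, hneq, _⟩ := P.nonincl t t' hlt
      exact hneq (congrFun h s)
    · obtain ⟨s, _, hneq, _⟩ := P.nonincl t' t hlt
      exact hneq (congrFun h.symm s)
  have hL : P.L ≤ (K+1)^n := by
    have := Fintype.card_le_of_injective P.σ hσinj
    simpa [Fintype.card_fun] using this
  -- per-fiber bound via the box lemma
  have fiber : ∀ S : Finset (Fin n),
      (Finset.univ.filter (fun t => Sfin t = S)).card ≤ K ^ S.card := by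
    intro S
    set Dt := Finset.univ.filter (fun t => Sfin t = S) with hDt
    set r := Dt.card with hr
    set e : Fin r ≃o {x // x ∈ Dt} := Dt.orderIsoOfFin rfl with he
    have hSe : ∀ j : Fin r, Sfin (e j).1 = S := by
      intro j
      have h2 := (e j).2
      simp only [hDt, Finset.mem_filter] at h2
      exact h2.2
    have hbox := pp_box_lemma (ι := {s // s ∈ S}) (K := K) (r := r)
      (fun j s => P.σ (e j).1 s.1)
      (fun j s => insert (P.σ (e j).1 s.1)
        (Finset.univ.filter (fun a => ((s : Fin n), a) ∈ P.T (e j).1)))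
      (fun j s => Finset.mem_insert_self _ _)
      (by
        intro j s
        have hs : s.1 ∈ Sfin (e j).1 := by rw [hSe j]; exact s.2
        obtain ⟨a, ha⟩ := (hSmem _ _).1 hs
        have hane : a ∈ Finset.univ.filter
            (fun a => ((s : Fin n), a) ∈ P.T (e j).1) := by simp [ha]
        have hnot : P.σ (e j).1 s.1 ∉ Finset.univ.filter
            (fun a => ((s : Fin n), a) ∈ P.T (e j).1) := by
          simp [P.hT]
        rw [Finset.card_insert_of_notMem hnot]
        have h1 : 1 ≤ (Finset.univ.filter
            (fun a => ((s : Fin n), a) ∈ P.T (e j).1)).card :=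
          Finset.card_pos.2 ⟨a, hane⟩
        omega)
      (by
        intro j j' hlt
        have hlt' : (e j).1 < (e j').1 := by
          exact_mod_cast e.strictMono hlt
        obtain ⟨s₀, hex, hneq, hnotin⟩ := P.nonincl (e j).1 (e j').1 hlt'
        have hs₀ : s₀ ∈ S := by rw [← hSe j]; exact (hSmem _ _).2 hex
        refine ⟨⟨s₀, hs₀⟩, ?_⟩
        intro hmem'
        rcases Finset.mem_insert.1 hmem' with h | h
        · exact hneq h
        · rw [Finset.mem_filter] at h
          exact hnotin h.2)
    rwa [Fintype.card_coe] at hbox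
  -- counting policies with small improvement state set
  have hsmallN : (Finset.univ.filter (fun t : Fin P.L => (Sfin t).card < B)).card
      ≤ ppSmall (K+1) n := by
    have hfib : ∀ i : ℕ,
        (Finset.univ.filter (fun t : Fin P.L => (Sfin t).card = i)).card
          ≤ n.choose i * K^i := by
      intro i
      have hsub : Finset.univ.filter (fun t : Fin P.L => (Sfin t).card = i) ⊆
          (Finset.powersetCard i (Finset.univ : Finset (Fin n))).biUnion
            (fun S => Finset.univ.filter (fun t => Sfin t = S)) := by
        intro t ht
        simp only [Finset.mem_filter, Finset.mem_univ, true_and] at ht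
        refine Finset.mem_biUnion.2 ⟨Sfin t, ?_, ?_⟩
        · exact Finset.mem_powersetCard.2 ⟨Finset.subset_univ _, ht⟩
        · simp
      calc (Finset.univ.filter (fun t : Fin P.L => (Sfin t).card = i)).card
          ≤ ((Finset.powersetCard i (Finset.univ : Finset (Fin n))).biUnion
            (fun S => Finset.univ.filter (fun t => Sfin t = S))).card :=
            Finset.card_le_card hsub
        _ ≤ ∑ S ∈ Finset.powersetCard i (Finset.univ : Finset (Fin n)),
            (Finset.univ.filter (fun t => Sfin t = S)).card :=
            Finset.card_biUnion_le
        _ ≤ ∑ S ∈ Finset.powersetCard i (Finset.univ : Finset (Fin n)), K^i := by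
            apply Finset.sum_le_sum
            intro S hS
            have := fiber S
            rwa [(Finset.mem_powersetCard.1 hS).2] at this
        _ = n.choose i * K^i := by
            rw [Finset.sum_const, Finset.card_powersetCard, Finset.card_univ,
              Fintype.card_fin, smul_eq_mul]
    have hpart := Finset.card_eq_sum_card_fiberwise
      (f := fun t : Fin P.L => (Sfin t).card)
      (s := Finset.univ.filter (fun t => (Sfin t).card < B))
      (t := Finset.range B)
      (by intro t ht
          simp only [Finset.mem_coe, Finset.mem_filter] at ht
          exact Finset.mem_range.2 ht.2)
    rw [hpart]
    have : ∀ i ∈ Finset.range B,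
        ((Finset.univ.filter (fun t : Fin P.L => (Sfin t).card < B)).filter
          (fun t => (Sfin t).card = i)).card ≤ n.choose i * K^i := by
      intro i _
      refine le_trans (Finset.card_le_card ?_) (hfib i)
      exact Finset.monotone_filter_left _ (Finset.filter_subset _ _)
    refine le_trans (Finset.sum_le_sum this) ?_
    rw [ppSmall_def]
    simp only [Nat.add_sub_cancel]
    rw [← hB]
  -- jump telescoping
  set Scard' : ℕ → ℕ := fun jv =>
    if h : jv < m then (Sfin (P.idx ⟨jv, h⟩)).card else 0 with hScard'
  set bigp : ℕ → Prop := fun jv => B ≤ Scard' jv with hbigp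
  have htel : ∀ jv, ∀ h : jv < m,
      (B+1) * ((Finset.range jv).filter bigp).card ≤ (P.idx ⟨jv, h⟩ : ℕ) := by
    intro jv
    induction jv with
    | zero => intro h; simp
    | succ jv IH =>
      intro h
      have hjv : jv < m := by omega
      have hstep : (P.idx ⟨jv, hjv⟩ : ℕ) < (P.idx ⟨jv+1, h⟩ : ℕ) :=
        P.idx_mono (by exact Fin.mk_lt_mk.2 (by omega))
      have hprev := IH hjv
      have hcardsplit : ((Finset.range (jv+1)).filter bigp).card =
          ((Finset.range jv).filter bigp).card + (if bigp jv then 1 else 0) := by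
        rw [Finset.range_add_one, Finset.filter_insert]
        by_cases hb : bigp jv
        · rw [if_pos hb, if_pos hb, Finset.card_insert_of_notMem (by simp)]
        · rw [if_neg hb, if_neg hb, add_zero]
      rw [hcardsplit, Nat.mul_add]
      by_cases hb : bigp jv
      · rw [if_pos hb]
        have hjump := P.jump jv h
        rw [h_ncard] at hjump
        have hBle : B ≤ (Sfin (P.idx ⟨jv, hjv⟩)).card := by
          have hb' := hb
          rw [hbigp] at hb'
          simpa [hScard', hjv] using hb'
        omega
      · rw [if_neg hb]
        omega
  -- assembling the count
  by_cases hm : m = 0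
  · subst hm
    have : (0:ℝ) ≤ ppBound (K+1) n := by
      unfold ppBound
      positivity
    simpa using this
  have hM : m - 1 < m := by omega
  have hsplit := Finset.card_filter_add_card_filter_not
    (s := (Finset.univ : Finset (Fin m))) (p := fun j => bigp j.1)
  have hcardm : (Finset.univ : Finset (Fin m)).card = m := by
    rw [Finset.card_univ, Fintype.card_fin]
  -- small part
  have hsmallJ : (Finset.univ.filter (fun j : Fin m => ¬ bigp j.1)).card
      ≤ ppSmall (K+1) n := by
    refine le_trans (Finset.card_le_card_of_injOn (fun j => P.idx j) ?_ ?_) hsmallN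
    · intro j hj
      simp only [Finset.mem_coe, Finset.mem_filter, Finset.mem_univ, true_and] at hj ⊢
      rw [hbigp, not_le] at hj
      simp only [hScard'] at hj
      rw [dif_pos j.2] at hj
      simpa using hj
    · exact Set.InjOn.mono (Set.subset_univ _) (P.idx_mono.injective.injOn)
  -- big part
  have hbigJ : (Finset.univ.filter (fun j : Fin m => bigp j.1)).card
      ≤ ((Finset.range (m-1)).filter bigp).card + 1 := by
    have hstep : (Finset.univ.filter (fun j : Fin m => bigp j.1)).card
        ≤ (((Finset.range (m-1)).filter bigp) ∪ {m-1}).card := by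
      refine Finset.card_le_card_of_injOn (fun j => j.1) ?_ ?_
      · intro j hj
        simp only [Finset.mem_coe, Finset.mem_filter, Finset.mem_univ, true_and] at hj
        by_cases hjm : j.1 < m - 1
        · exact Finset.mem_union_left _ (Finset.mem_filter.2 ⟨Finset.mem_range.2 hjm, hj⟩)
        · have : j.1 = m - 1 := by omega
          exact Finset.mem_union_right _ (by simp [this])
      · exact Set.InjOn.mono (Set.subset_univ _) (Fin.val_injective.injOn)
    refine le_trans hstep ?_
    refine le_trans (Finset.card_union_le _ _) ?_
    simp
  have hbigcount : (B+1) * ((Finset.range (m-1)).filter bigp).card < (K+1)^n := by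
    have h1 := htel (m-1) hM
    have h2 : (P.idx ⟨m-1, hM⟩ : ℕ) < P.L := (P.idx ⟨m-1, hM⟩).2
    omega
  -- combine in ℝ
  set cb := ((Finset.range (m-1)).filter bigp).card with hcb
  have hmle : m ≤ ppSmall (K+1) n + (cb + 1) := by
    have := hsplit
    rw [hcardm] at this
    omega
  have hcbR : (cb : ℝ) ≤ (K+1:ℝ)^n / ((B:ℝ)+1) := by
    rw [le_div_iff₀ (by positivity)]
    have := hbigcount.le
    calc (cb:ℝ) * ((B:ℝ)+1) = (((B+1) * cb : ℕ) : ℝ) := by push_cast; ring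
      _ ≤ (((K+1)^n : ℕ) : ℝ) := by exact_mod_cast this
      _ = ((K:ℝ)+1)^n := by push_cast; ring
  have : (m:ℝ) ≤ (ppSmall (K+1) n : ℝ) + ((cb:ℝ) + 1) := by exact_mod_cast hmle
  refine le_trans this ?_
  unfold ppBound
  rw [← hB]
  push_cast
  linarith

lemma ppD_le (n : ℕ) : ppD n ≤ n := by
  rw [ppD_def]
  calc Nat.sqrt n * Nat.sqrt (Nat.sqrt n) ≤ Nat.sqrt n * Nat.sqrt n :=
        Nat.mul_le_mul_left _ (Nat.sqrt_le_self _)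
    _ ≤ n := Nat.sqrt_le n

set_option maxHeartbeats 1000000 in
lemma ppSmall_bound (k n : ℕ) (hk : 2 ≤ k) (hn : 1 ≤ n) :
    (ppSmall k n : ℝ) ≤ (k:ℝ)^n * Real.exp (-((ppD n : ℝ))^2/(8*(n:ℝ))) := by
  obtain ⟨K, rfl⟩ : ∃ K, k = K + 1 := ⟨k - 1, by omega⟩
  have hK : 1 ≤ K := by omega
  have hn' : (0:ℝ) < n := by exact_mod_cast hn
  have hk0 : (0:ℝ) < ((K:ℝ)+1) := by positivity
  set d : ℝ := (ppD n : ℝ) with hd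
  have hd0 : 0 ≤ d := Nat.cast_nonneg _
  by_cases hB0 : ppB (K+1) n = 0
  · rw [ppSmall_def, hB0]
    simp only [Finset.range_zero, Finset.sum_empty, Nat.cast_zero]
    positivity
  have hB1 : 1 ≤ ppB (K+1) n := Nat.one_le_iff_ne_zero.2 hB0
  set B := ppB (K+1) n with hB
  have hBdef : B = (K*n)/(K+1) - ppD n := by
    rw [hB, ppB_def]; simp
  have hBD : B + ppD n = (K*n)/(K+1) := by
    have h0 : ppB (K+1) n = (K*n)/(K+1) - ppD n := by rw [ppB_def]; simp
    omega
  have hcastdiv : (((K*n)/(K+1) : ℕ) : ℝ) ≤ (K:ℝ)*n/((K:ℝ)+1) := by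
    have := Nat.cast_div_le (α := ℝ) (m := K*n) (n := K+1)
    push_cast at this ⊢
    convert this using 2
  have hBr : (B:ℝ) ≤ (K:ℝ)*n/((K:ℝ)+1) - d := by
    have h2 : (B:ℝ) + d = (((K*n)/(K+1) : ℕ) : ℝ) := by
      rw [hd]
      exact_mod_cast congrArg (Nat.cast : ℕ → ℝ) hBD
    linarith
  have hBn : B ≤ n := by
    have h1 : (K*n)/(K+1) ≤ n := by
      calc (K*n)/(K+1) ≤ ((K+1)*n)/(K+1) :=
            Nat.div_le_div_right (Nat.mul_le_mul_right _ (by omega))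
        _ = n := Nat.mul_div_cancel_left _ (by omega)
    omega
  have hBnR : (B:ℝ) ≤ (n:ℝ) := by exact_mod_cast hBn
  set ε : ℝ := d/(4*(n:ℝ)) with hεdef
  have hε0 : 0 ≤ ε := by positivity
  have hε4 : ε ≤ 1/4 := by
    rw [hεdef, div_le_iff₀ (by positivity)]
    have : d ≤ (n:ℝ) := by rw [hd]; exact_mod_cast ppD_le n
    linarith
  set θ : ℝ := 1 - ε with hθdef
  have hθpos : 0 < θ := by rw [hθdef]; linarith
  have hθ1 : θ ≤ 1 := by rw [hθdef]; linarith
  set κ : ℝ := (K:ℝ) with hκdef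
  have hκ0 : 0 < κ := by rw [hκdef]; exact_mod_cast hK
  -- step 1: multiply by θ^(B-1)
  have h1 : (ppSmall (K+1) n : ℝ) * θ^(B-1)
      ≤ ∑ i ∈ Finset.range B, (n.choose i : ℝ) * (κ*θ)^i := by
    have hcast : (ppSmall (K+1) n : ℝ)
        = ∑ i ∈ Finset.range B, (n.choose i : ℝ) * κ^i := by
      rw [ppSmall_def, ← hB]
      push_cast
      apply Finset.sum_congr rfl
      intro i _
      norm_num [hκdef]
    rw [hcast, Finset.sum_mul]
    apply Finset.sum_le_sum
    intro i hi
    have hiB : i ≤ B - 1 := by have := Finset.mem_range.1 hi; omega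
    have hθpow : θ^(B-1) ≤ θ^i := pow_le_pow_of_le_one hθpos.le hθ1 hiB
    have hnn : (0:ℝ) ≤ (n.choose i : ℝ) * κ^i := by positivity
    calc (n.choose i : ℝ) * κ^i * θ^(B-1)
        ≤ (n.choose i : ℝ) * κ^i * θ^i := by
          exact mul_le_mul_of_nonneg_left hθpow hnn
      _ = (n.choose i : ℝ) * (κ*θ)^i := by rw [mul_pow]; ring
  have h2 : ∑ i ∈ Finset.range B, (n.choose i : ℝ) * (κ*θ)^i ≤ (κ*θ+1)^n := by
    have hκθ : (0:ℝ) ≤ κ*θ := by positivity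
    have hsub : Finset.range B ⊆ Finset.range (n+1) :=
      Finset.range_subset_range.2 (by omega)
    calc ∑ i ∈ Finset.range B, (n.choose i:ℝ)*(κ*θ)^i
        ≤ ∑ i ∈ Finset.range (n+1), (n.choose i:ℝ)*(κ*θ)^i :=
          Finset.sum_le_sum_of_subset_of_nonneg hsub (fun i _ _ => by positivity)
      _ = (κ*θ+1)^n := by
          rw [add_pow]
          apply Finset.sum_congr rfl
          intro i _
          rw [one_pow]
          ring
  have h3 : (κ*θ+1)^n ≤ ((K:ℝ)+1)^n * Real.exp (-(κ/((K:ℝ)+1))*ε*n) := by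
    have hbase : κ*θ+1 ≤ ((K:ℝ)+1) * Real.exp (-(κ/((K:ℝ)+1))*ε) := by
      have hexp := Real.add_one_le_exp (-(κ/((K:ℝ)+1))*ε)
      have heq : κ*θ+1 = ((K:ℝ)+1) * (-(κ/((K:ℝ)+1))*ε + 1) := by
        rw [hθdef]
        field_simp
        ring
      rw [heq]
      exact mul_le_mul_of_nonneg_left hexp hk0.le
    calc (κ*θ+1)^n ≤ (((K:ℝ)+1) * Real.exp (-(κ/((K:ℝ)+1))*ε))^n :=
          pow_le_pow_left₀ (by positivity) hbase n
      _ = ((K:ℝ)+1)^n * Real.exp (-(κ/((K:ℝ)+1))*ε*n) := by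
          rw [mul_pow, ← Real.exp_nat_mul]
          congr 1
          ring
  have h4 : (1:ℝ) ≤ θ^(B-1) * Real.exp ((ε+2*ε^2)*((B-1:ℕ):ℝ)) := by
    have hθinv : (1:ℝ) ≤ θ * Real.exp (ε+2*ε^2) := by
      have hexp := Real.add_one_le_exp (ε+2*ε^2)
      have h5 : (1:ℝ) ≤ θ * (1 + (ε+2*ε^2)) := by
        rw [hθdef]
        nlinarith [hε0, hε4]
      calc (1:ℝ) ≤ θ * (1+(ε+2*ε^2)) := h5
        _ ≤ θ * Real.exp (ε+2*ε^2) := by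
            apply mul_le_mul_of_nonneg_left _ hθpos.le
            linarith
    calc (1:ℝ) = 1^(B-1) := (one_pow _).symm
      _ ≤ (θ * Real.exp (ε+2*ε^2))^(B-1) :=
          pow_le_pow_left₀ (by norm_num) hθinv _
      _ = θ^(B-1) * Real.exp ((ε+2*ε^2)*((B-1:ℕ):ℝ)) := by
          rw [mul_pow, ← Real.exp_nat_mul]
          congr 2
          ring
  have hBr1 : ((B-1 : ℕ):ℝ) ≤ (B:ℝ) := Nat.cast_le.mpr (Nat.sub_le B 1)
  have hB10 : (0:ℝ) ≤ ((B-1:ℕ):ℝ) := Nat.cast_nonneg _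
  have hexpineq : -(κ/((K:ℝ)+1))*ε*n + (ε+2*ε^2)*((B-1:ℕ):ℝ)
      ≤ -d^2/(8*(n:ℝ)) := by
    have h0 : (0:ℝ) ≤ ε + 2*ε^2 := by positivity
    have hb1 : (ε+2*ε^2)*((B-1:ℕ):ℝ) ≤ ε*(B:ℝ) + 2*ε^2*(n:ℝ) := by
      have hA : (ε+2*ε^2)*((B-1:ℕ):ℝ) ≤ (ε+2*ε^2)*(B:ℝ) :=
        mul_le_mul_of_nonneg_left hBr1 h0
      nlinarith [hε0, sq_nonneg ε]
    have h6 : -(κ/((K:ℝ)+1))*ε*n + ε*(B:ℝ) ≤ -(ε*d) := by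
      have hA : ε*(B:ℝ) ≤ ε*((K:ℝ)*n/((K:ℝ)+1) - d) :=
        mul_le_mul_of_nonneg_left hBr hε0
      have hB2 : ε*((K:ℝ)*n/((K:ℝ)+1)) = (κ/((K:ℝ)+1))*ε*n := by
        rw [hκdef]
        field_simp
      rw [mul_sub] at hA
      linarith [hA, hB2]
    have h7 : -(ε*d) + 2*ε^2*(n:ℝ) = -d^2/(8*(n:ℝ)) := by
      have hne : (n:ℝ) ≠ 0 := ne_of_gt hn'
      rw [hεdef, div_pow]
      field_simp
      ring
    linarith
  have hS0 : (0:ℝ) ≤ (ppSmall (K+1) n : ℝ) := Nat.cast_nonneg _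
  calc (ppSmall (K+1) n : ℝ) = (ppSmall (K+1) n : ℝ) * 1 := (mul_one _).symm
    _ ≤ (ppSmall (K+1) n : ℝ)
        * (θ^(B-1) * Real.exp ((ε+2*ε^2)*((B-1:ℕ):ℝ))) :=
        mul_le_mul_of_nonneg_left h4 hS0
    _ = ((ppSmall (K+1) n : ℝ) * θ^(B-1))
        * Real.exp ((ε+2*ε^2)*((B-1:ℕ):ℝ)) := by ring
    _ ≤ (∑ i ∈ Finset.range B, (n.choose i:ℝ)*(κ*θ)^i)
        * Real.exp ((ε+2*ε^2)*((B-1:ℕ):ℝ)) :=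
        mul_le_mul_of_nonneg_right h1 (Real.exp_pos _).le
    _ ≤ (κ*θ+1)^n * Real.exp ((ε+2*ε^2)*((B-1:ℕ):ℝ)) :=
        mul_le_mul_of_nonneg_right h2 (Real.exp_pos _).le
    _ ≤ (((K:ℝ)+1)^n * Real.exp (-(κ/((K:ℝ)+1))*ε*n))
        * Real.exp ((ε+2*ε^2)*((B-1:ℕ):ℝ)) :=
        mul_le_mul_of_nonneg_right h3 (Real.exp_pos _).le
    _ = ((K:ℝ)+1)^n
        * Real.exp (-(κ/((K:ℝ)+1))*ε*n + (ε+2*ε^2)*((B-1:ℕ):ℝ)) := by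
        rw [Real.exp_add]; ring
    _ ≤ ((K:ℝ)+1)^n * Real.exp (-d^2/(8*(n:ℝ))) := by
        apply mul_le_mul_of_nonneg_left (Real.exp_le_exp.2 hexpineq) (by positivity)
    _ = ((K+1:ℕ):ℝ)^n * Real.exp (-d^2/(8*(n:ℝ))) := by push_cast; ring

/-! ### Asymptotics -/


lemma pp_sqrt_tendsto : Tendsto (fun n : ℕ => Nat.sqrt n) atTop atTop := by
  apply Filter.tendsto_atTop_atTop.2
  intro b
  exact ⟨b*b, fun a ha => Nat.le_sqrt.2 ha⟩

lemma pp_sqrt2_tendsto :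
    Tendsto (fun n : ℕ => Nat.sqrt (Nat.sqrt n)) atTop atTop :=
  pp_sqrt_tendsto.comp pp_sqrt_tendsto

/-- `ppD n / n → 0` -/
lemma ppD_div_tendsto : Tendsto (fun n : ℕ => (ppD n : ℝ)/n) atTop (𝓝 0) := by
  have hq : Tendsto (fun n : ℕ => (Nat.sqrt (Nat.sqrt n) : ℝ)) atTop atTop :=
    tendsto_natCast_atTop_atTop.comp pp_sqrt2_tendsto
  have hinv : Tendsto (fun n : ℕ => ((Nat.sqrt (Nat.sqrt n) : ℝ))⁻¹) atTop (𝓝 0) :=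
    hq.inv_tendsto_atTop
  apply squeeze_zero' (g := fun n : ℕ => ((Nat.sqrt (Nat.sqrt n) : ℝ))⁻¹)
  · filter_upwards [eventually_ge_atTop 1] with n hn
    positivity
  · filter_upwards [eventually_ge_atTop 1] with n hn
    have hn' : (0:ℝ) < n := by exact_mod_cast hn
    have hs1 : 0 < Nat.sqrt n := Nat.sqrt_pos.2 hn
    have hq1 : 0 < Nat.sqrt (Nat.sqrt n) := Nat.sqrt_pos.2 hs1
    have hq1R : (0:ℝ) < (Nat.sqrt (Nat.sqrt n) : ℝ) := by exact_mod_cast hq1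
    have hkey : ppD n * Nat.sqrt (Nat.sqrt n) ≤ n := by
      rw [ppD_def]
      calc Nat.sqrt n * Nat.sqrt (Nat.sqrt n) * Nat.sqrt (Nat.sqrt n)
          = Nat.sqrt n * (Nat.sqrt (Nat.sqrt n) * Nat.sqrt (Nat.sqrt n)) := by ring
        _ ≤ Nat.sqrt n * Nat.sqrt n :=
            Nat.mul_le_mul_left _ (Nat.sqrt_le _)
        _ ≤ n := Nat.sqrt_le n
    rw [div_le_iff₀ hn', inv_mul_eq_div, le_div_iff₀ hq1R]
    exact_mod_cast hkey
  · exact hinv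

/-- Eventually `ppD n ≤ ((k-1)*n)/k` (in ℕ). -/
lemma ppD_eventually_le (k : ℕ) (hk : 2 ≤ k) :
    ∀ᶠ n : ℕ in atTop, ppD n ≤ ((k-1)*n)/k := by
  have hk0 : (0:ℝ) < k := by positivity
  have hsmall := ppD_div_tendsto.eventually
    (eventually_le_nhds (show (0:ℝ) < 1/(2*k) by positivity))
  filter_upwards [hsmall, eventually_ge_atTop 1] with n hDn hn
  have hn' : (0:ℝ) < n := by exact_mod_cast hn
  have h1 : (ppD n : ℝ) ≤ n/(2*k) := by
    calc (ppD n : ℝ) = ((ppD n : ℝ)/n) * n := by field_simp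
      _ ≤ (1/(2*k)) * n := by
          apply mul_le_mul_of_nonneg_right hDn hn'.le
      _ = n/(2*k) := by ring
  have h2 : ppD n * k ≤ (k-1)*n := by
    have h2R : (ppD n : ℝ) * k ≤ (((k-1:ℕ)):ℝ) * n := by
      have hx : (ppD n : ℝ) * k ≤ n/2 := by
        rw [le_div_iff₀ (by norm_num : (0:ℝ) < 2)]
        calc (ppD n : ℝ) * k * 2 = (ppD n : ℝ) * (2*k) := by ring
          _ ≤ (n/(2*k)) * (2*k) := by
              apply mul_le_mul_of_nonneg_right h1 (by positivity)
          _ = n := by field_simp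
      have hcast : (((k-1:ℕ)):ℝ) = (k:ℝ) - 1 := by
        rw [Nat.cast_sub (by omega)]; norm_num
      have hk1 : (1:ℝ) ≤ (k:ℝ)-1 := by
        have : (2:ℝ) ≤ k := by exact_mod_cast hk
        linarith
      rw [hcast]
      nlinarith
    exact_mod_cast h2R
  exact (Nat.le_div_iff_mul_le (by omega)).2 h2

/-- `(ppB k n + 1)/n → (k-1)/k` -/
lemma ppB_tendsto (k : ℕ) (hk : 2 ≤ k) :
    Tendsto (fun n : ℕ => ((ppB k n : ℝ)+1)/n) atTop (𝓝 (((k:ℝ)-1)/k)) := by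
  have hk0 : (0:ℝ) < k := by positivity
  set c : ℝ := ((k:ℝ)-1)/k with hc
  have hlow : Tendsto (fun n : ℕ => c - (ppD n : ℝ)/n) atTop (𝓝 c) := by
    have h := (tendsto_const_nhds (x := c) (f := (atTop : Filter ℕ))).sub ppD_div_tendsto
    simpa using h
  have hhigh : Tendsto (fun n : ℕ => c + 1/(n:ℝ)) atTop (𝓝 c) := by
    have hn : Tendsto (fun n : ℕ => 1/(n:ℝ)) atTop (𝓝 0) :=
      tendsto_one_div_atTop_nhds_zero_nat
    simpa using (tendsto_const_nhds (x := c)).add hn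
  apply tendsto_of_tendsto_of_tendsto_of_le_of_le' hlow hhigh
  · -- lower bound eventually
    filter_upwards [ppD_eventually_le k hk, eventually_ge_atTop 1] with n hD hn
    have hn' : (0:ℝ) < n := by exact_mod_cast hn
    set a := (k-1)*n with ha
    set q := a/k with hq
    have hBq : ppB k n = q - ppD n := by rw [ppB_def]
    have hfloor : (a:ℝ) < k*((q:ℝ)+1) := by
      have h3 : a < k*q + k := by
        conv_lhs => rw [← Nat.div_add_mod a k]
        exact Nat.add_lt_add_left (Nat.mod_lt _ (by omega)) _
      have : a < k*(q+1) := by rw [Nat.mul_add, Nat.mul_one]; exact h3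
      exact_mod_cast this
    have haR : (a:ℝ) = ((k:ℝ)-1)*n := by
      rw [ha]
      push_cast [Nat.cast_sub (show 1 ≤ k by omega)]
      ring
    -- (B+1)/n ≥ c - D/n
    have hBD : (ppB k n : ℝ) + ppD n = (q:ℝ) := by
      have hz : ppB k n + ppD n = q := by
        rw [hBq]
        omega
      exact_mod_cast hz
    have h4 : c ≤ ((q:ℝ)+1)/n := by
      rw [hc, div_le_div_iff₀ hk0 hn']
      calc ((k:ℝ)-1)*n = (a:ℝ) := haR.symm
        _ ≤ (k:ℝ)*((q:ℝ)+1) := hfloor.le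
        _ = ((q:ℝ)+1)*(k:ℝ) := by ring
    have h5 : ((q:ℝ)+1)/n = ((ppB k n:ℝ)+1)/n + (ppD n:ℝ)/n := by
      rw [← hBD]; ring
    linarith [h4, h5.le]
  · -- upper bound eventually
    filter_upwards [eventually_ge_atTop 1] with n hn
    have hn' : (0:ℝ) < n := by exact_mod_cast hn
    have hBle : (ppB k n : ℝ) ≤ ((k:ℝ)-1)*n/k := by
      have h1 : ppB k n ≤ ((k-1)*n)/k := by
        rw [ppB_def]; exact Nat.sub_le _ _
      have h2 : ((((k-1)*n)/k : ℕ) : ℝ) ≤ (((k-1)*n : ℕ) : ℝ)/k :=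
        Nat.cast_div_le
      have h3 : (((k-1)*n : ℕ):ℝ) = ((k:ℝ)-1)*n := by
        push_cast [Nat.cast_sub (show 1 ≤ k by omega)]
        ring
      calc (ppB k n : ℝ) ≤ ((((k-1)*n)/k : ℕ) : ℝ) := by exact_mod_cast h1
        _ ≤ ((k:ℝ)-1)*n/k := by rw [← h3]; exact h2
    rw [div_le_iff₀ hn']
    have : c * n = ((k:ℝ)-1)*n/k := by rw [hc]; ring
    rw [add_mul, this]
    have h1n : 1/(n:ℝ) * n = 1 := by field_simp
    rw [h1n]
    linarith

/-- `n * exp(-(ppD n)^2/(8n)) → 0` -/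
lemma pp_small_factor_tendsto :
    Tendsto (fun n : ℕ => (n:ℝ) * Real.exp (-((ppD n : ℝ))^2/(8*(n:ℝ))))
      atTop (𝓝 0) := by
  have hsq : Tendsto (fun n : ℕ => (Nat.sqrt n : ℝ)) atTop atTop :=
    tendsto_natCast_atTop_atTop.comp pp_sqrt_tendsto
  -- φ(x) = 4x² e^{-x/32} → 0
  have hφ : Tendsto (fun x : ℝ => 4*x^2 * Real.exp (-(x/32))) atTop (𝓝 0) := by
    have h0 := Real.tendsto_pow_mul_exp_neg_atTop_nhds_zero 2
    have hdiv : Tendsto (fun x : ℝ => x/32) atTop atTop :=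
      Tendsto.atTop_div_const (by norm_num) tendsto_id
    have h1 := (h0.comp hdiv).const_mul (4*32^2 : ℝ)
    simp only [Function.comp_def] at h1
    have h2 : (fun x : ℝ => (4*32^2 : ℝ) * ((x/32)^2 * Real.exp (-(x/32))))
        = (fun x : ℝ => 4*x^2 * Real.exp (-(x/32))) := by
      funext x
      field_simp
    rw [h2] at h1
    simpa using h1
  have hcomp := hφ.comp hsq
  apply squeeze_zero' (g := fun n : ℕ => 4*((Nat.sqrt n : ℝ))^2
      * Real.exp (-((Nat.sqrt n : ℝ)/32)))
  · filter_upwards [eventually_ge_atTop 1] with n hn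
    positivity
  · filter_upwards [eventually_ge_atTop 256] with n hn
    have hn1 : 1 ≤ n := by omega
    have hn' : (0:ℝ) < n := by exact_mod_cast hn1
    set s := Nat.sqrt n with hs
    set qq := Nat.sqrt s with hqq
    have hs16 : 16 ≤ s := by
      rw [hs]; exact Nat.le_sqrt.2 (by omega)
    have hq4 : 4 ≤ qq := by
      rw [hqq]; exact Nat.le_sqrt.2 (by omega)
    have hq2 : qq*qq ≤ s := Nat.sqrt_le s
    have hs2 : s < (qq+1)*(qq+1) := Nat.lt_succ_sqrt s
    have hnlt : n < (s+1)*(s+1) := Nat.lt_succ_sqrt n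
    -- key: n ≤ 4*s*qq²
    have hkey : n ≤ 4*(s*(qq*qq)) := by
      have e0 : s ≤ qq*qq + 2*qq := by nlinarith [hs2]
      have e1 : s ≤ 2*(qq*qq) := by nlinarith [e0, hq4]
      have e2 : n ≤ s*s + 2*s := by nlinarith [hnlt]
      have e3 : s*s ≤ s*(2*(qq*qq)) := Nat.mul_le_mul_left s e1
      have e4 : 2*s ≤ s*(qq*qq) := by nlinarith [hq4, hs16]
      have e5 : s*(2*(qq*qq)) + s*(qq*qq) = 3*(s*(qq*qq)) := by ring
      have e6 : 3*(s*(qq*qq)) ≤ 4*(s*(qq*qq)) :=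
        Nat.mul_le_mul_right _ (by norm_num)
      omega
    -- n ≤ 4 s²
    have hn4s : n ≤ 4*(s*s) := by nlinarith [hnlt, hs16]
    -- exponent: (ppD n)²/(8n) ≥ s/32
    have hexp : ((s:ℝ))/32 ≤ ((ppD n : ℝ))^2/(8*(n:ℝ)) := by
      have hDval : (ppD n : ℝ) = (s:ℝ)*(qq:ℝ) := by
        rw [ppD_def, ← hs, ← hqq]; push_cast; ring
      rw [hDval, div_le_div_iff₀ (by norm_num) (by positivity)]
      have hcst : (n:ℝ) ≤ 4*((s:ℝ)*((qq:ℝ)*qq)) := by exact_mod_cast hkey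
      calc (s:ℝ)*(8*(n:ℝ)) = 8*(s:ℝ)*(n:ℝ) := by ring
        _ ≤ 8*(s:ℝ)*(4*((s:ℝ)*((qq:ℝ)*qq))) := by
            apply mul_le_mul_of_nonneg_left hcst (by positivity)
        _ = ((s:ℝ)*(qq:ℝ))^2*32 := by ring
    calc (n:ℝ) * Real.exp (-((ppD n : ℝ))^2/(8*(n:ℝ)))
        ≤ (4*((s:ℝ))^2) * Real.exp (-((s:ℝ)/32)) := by
          apply mul_le_mul
          · have : (n:ℝ) ≤ 4*((s:ℝ)*s) := by exact_mod_cast hn4s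
            nlinarith [this]
          · rw [Real.exp_le_exp]
            rw [neg_div]
            linarith [hexp]
          · positivity
          · positivity
      _ = 4*((s:ℝ))^2 * Real.exp (-((s:ℝ)/32)) := by ring
  · exact hcomp

open Asymptotics Filter in
theorem pseudoPI_asymptotic_upper_bound (k : ℕ) (hk : 2 ≤ k) :
    ∃ g : ℕ → ℝ,
      g =o[atTop] (fun n : ℕ => (k : ℝ) ^ n / n) ∧
      ∀ n : ℕ, 1 ≤ n → ∀ m : ℕ, PseudoPISeq n k m →
        (m : ℝ) ≤ (k : ℝ) / ((k : ℝ) - 1) * ((k : ℝ) ^ n / n) + g n := by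
  have hk1 : (1:ℝ) < k := by exact_mod_cast (show 1 < k by omega)
  have hkm1 : (0:ℝ) < (k:ℝ)-1 := by linarith
  have hk0 : (0:ℝ) < k := by linarith
  set f : ℕ → ℝ := fun n => (k:ℝ)^n/n with hf
  refine ⟨fun n => ppBound k n - (k:ℝ)/((k:ℝ)-1)*(f n), ?_, ?_⟩
  · -- littleo part
    have hfO : f =O[atTop] f := isBigO_refl _ _
    have hn2 : (fun n : ℕ => ((n:ℝ))^2) =o[atTop] (fun n : ℕ => (k:ℝ)^n) :=
      isLittleO_pow_const_const_pow_of_one_lt 2 hk1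
    have hf_ge : ∀ᶠ n : ℕ in atTop, (n:ℝ) ≤ f n := by
      have h1 := hn2.def (by norm_num : (0:ℝ) < 1)
      filter_upwards [h1, eventually_ge_atTop 1] with n hb hn1
      have hn' : (0:ℝ) < n := by exact_mod_cast hn1
      rw [Real.norm_eq_abs, Real.norm_eq_abs, abs_of_nonneg (by positivity),
        abs_of_nonneg (by positivity), one_mul] at hb
      show (n:ℝ) ≤ (k:ℝ)^n/n
      rw [le_div_iff₀ hn']
      nlinarith [hb]
    have hf_tend : Tendsto f atTop atTop :=
      tendsto_atTop_mono' atTop hf_ge tendsto_natCast_atTop_atTop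
    -- term 1 : ppSmall
    have ht1 : (fun n : ℕ => (ppSmall k n : ℝ)) =o[atTop] f := by
      have hbig : (fun n : ℕ => (ppSmall k n : ℝ)) =O[atTop]
          (fun n : ℕ => f n * ((n:ℝ) * Real.exp (-((ppD n:ℝ))^2/(8*(n:ℝ))))) := by
        apply IsBigO.of_bound 1
        filter_upwards [eventually_ge_atTop 1] with n hn1
        have hn' : (0:ℝ) < n := by exact_mod_cast hn1
        have hp := ppSmall_bound k n hk hn1
        rw [one_mul, Real.norm_eq_abs, Real.norm_eq_abs,
          abs_of_nonneg (Nat.cast_nonneg _), abs_of_nonneg (by positivity)]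
        have heq : f n * ((n:ℝ) * Real.exp (-((ppD n:ℝ))^2/(8*(n:ℝ))))
            = (k:ℝ)^n * Real.exp (-((ppD n:ℝ))^2/(8*(n:ℝ))) := by
          rw [hf]
          field_simp
        rw [heq]; exact hp
      have hlit : (fun n : ℕ => f n * ((n:ℝ) * Real.exp (-((ppD n:ℝ))^2/(8*(n:ℝ)))))
          =o[atTop] f := by
        have := hfO.mul_isLittleO ((isLittleO_one_iff ℝ).2 pp_small_factor_tendsto)
        simpa using this
      exact hbig.trans_isLittleO hlit
    -- term 2 : the dominant fraction
    have hcne : ((k:ℝ)-1)/k ≠ 0 := ne_of_gt (by positivity)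
    have hinv := (ppB_tendsto k hk).inv₀ hcne
    have hinv' : Tendsto (fun n : ℕ => (n:ℝ)/((ppB k n : ℝ)+1)) atTop
        (𝓝 ((k:ℝ)/((k:ℝ)-1))) := by
      have h2 : (((k:ℝ)-1)/k)⁻¹ = (k:ℝ)/((k:ℝ)-1) := by rw [inv_div]
      rw [← h2]
      refine hinv.congr (fun n => ?_)
      rw [inv_div]
    have hε₂ : Tendsto (fun n : ℕ => (n:ℝ)/((ppB k n:ℝ)+1) - (k:ℝ)/((k:ℝ)-1))
        atTop (𝓝 0) := by
      have := hinv'.sub_const ((k:ℝ)/((k:ℝ)-1))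
      simpa using this
    have ht2 : (fun n : ℕ => (k:ℝ)^n/((ppB k n : ℝ)+1) - (k:ℝ)/((k:ℝ)-1)*(f n))
        =o[atTop] f := by
      have hprod : (fun n : ℕ =>
          f n * ((n:ℝ)/((ppB k n:ℝ)+1) - (k:ℝ)/((k:ℝ)-1))) =o[atTop] f := by
        have := hfO.mul_isLittleO ((isLittleO_one_iff ℝ).2 hε₂)
        simpa using this
      refine hprod.congr' ?_ (EventuallyEq.refl _ _)
      filter_upwards [eventually_ge_atTop 1] with n hn1
      have hn' : (0:ℝ) < n := by exact_mod_cast hn1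
      have hB0 : (0:ℝ) < (ppB k n:ℝ)+1 := by positivity
      show f n * ((n:ℝ)/((ppB k n:ℝ)+1) - (k:ℝ)/((k:ℝ)-1))
          = (k:ℝ)^n/((ppB k n : ℝ)+1) - (k:ℝ)/((k:ℝ)-1)*(f n)
      rw [hf]
      field_simp
    -- term 3 : constant
    have ht3 : (fun _ : ℕ => (1:ℝ)) =o[atTop] f := by
      rw [isLittleO_const_left]
      right
      have hnf : (norm ∘ f) = f := by
        funext n
        simp only [Function.comp_apply, Real.norm_eq_abs]
        exact abs_of_nonneg (by rw [hf]; positivity)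
      rw [hnf]
      exact hf_tend
    have hsum := (ht1.add ht2).add ht3
    have hgeq : (fun n => ppBound k n - (k:ℝ)/((k:ℝ)-1)*(f n))
        = fun n => (((ppSmall k n : ℝ))
          + ((k:ℝ)^n/((ppB k n : ℝ)+1) - (k:ℝ)/((k:ℝ)-1)*(f n))) + 1 := by
      funext n
      simp only [ppBound]
      ring
    rw [hgeq]
    exact hsum
  · intro n hn m P
    have hmain := pp_main k n m hk hn P
    have hfn : f n = (k:ℝ)^n/n := rfl
    have : (k:ℝ)/((k:ℝ)-1) * ((k:ℝ)^n/n)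
        + (ppBound k n - (k:ℝ)/((k:ℝ)-1)*(f n)) = ppBound k n := by
      rw [hfn]; ring
    linarith [hmain, this]
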